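/- The polynomial p(x₀,x₁,x₂) = 2x₀²x₁ − (x₀² + 3x₁²)x₂ is not hyperbolic with respect to any direction: for every e ∈ ℝ³ with p(e) ≠ 0, there exists x ∈ ℝ³ such that the one-variable polynomial t ↦ p(x − t·e) has a non-real zero. -/

import Mathlib

open MvPolynomial Polynomial

/-- The one-variable complex polynomial `t ↦ P(x - t·e)` for `P ∈ ℝ[x₀,…,x_{N-1}]`. -/
noncomputable def linePoly {N : ℕ} (p : MvPolynomial (Fin N) ℝ) (x e : Fin N → ℝ) :
    Polynomial ℂ :=
  MvPolynomial.aeval (fun i => Polynomial.C (x i : ℂ) - Polynomial.C (e i : ℂ) * Polynomial.X) p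

/-- The example polynomial `p(x₀,x₁,x₂) = 2x₀²x₁ − (x₀² + 3x₁²)x₂`. -/
noncomputable def examplePoly : MvPolynomial (Fin 3) ℝ :=
  2 * X 0 ^ 2 * X 1 - (X 0 ^ 2 + 3 * X 1 ^ 2) * X 2

namespace NotHyperbolicAux

open Complex

/-- The key real quantity: `W = Im(2α²β·conj(D)) - c·|D|²` where `α = y0 + i a`,
`β = y1 + i b`, `D = α² + 3β²`.  A zero of `W` with `D ≠ 0` produces a real point `y`
with `p(y + i e) = 0`. -/
noncomputable def Wex (a b c y0 y1 : ℝ) : ℝ :=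
  2*(((y0^2 - a^2)*b + 2*a*y0*y1) * (y0^2 - a^2 + 3*y1^2 - 3*b^2)
      - ((y0^2 - a^2)*y1 - 2*a*y0*b) * (2*a*y0 + 6*b*y1))
    - c*((y0^2 - a^2 + 3*y1^2 - 3*b^2)^2 + (2*a*y0 + 6*b*y1)^2)

def goodPair (a b c : ℝ) : Prop :=
  ∃ y0 y1 : ℝ, Wex a b c y0 y1 = 0 ∧
    (y0^2 - a^2 + 3*y1^2 - 3*b^2)^2 + (2*a*y0 + 6*b*y1)^2 ≠ 0

lemma EFne' {E F : ℝ} (h : F ≠ 0) : E^2 + F^2 ≠ 0 := by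
  have h2 : 0 < F^2 := lt_of_le_of_ne (sq_nonneg F) (Ne.symm (pow_ne_zero 2 h))
  nlinarith [sq_nonneg E]

lemma ivt_sign {f : ℝ → ℝ} (hf : Continuous f) {x y : ℝ} (hxy : x < y)
    (h : f x * f y < 0) : ∃ t, t ∈ Set.Ioo x y ∧ f t = 0 := by
  rcases lt_trichotomy (f x) 0 with hx | hx | hx
  · have hy : 0 < f y := by nlinarith
    obtain ⟨t, ht, hft⟩ := intermediate_value_Ioo (le_of_lt hxy) hf.continuousOn
      (Set.mem_Ioo.mpr ⟨hx, hy⟩)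
    exact ⟨t, ht, hft⟩
  · exfalso; rw [hx] at h; simp at h
  · have hy : f y < 0 := by nlinarith
    obtain ⟨t, ht, hft⟩ := intermediate_value_Ioo' (le_of_lt hxy) hf.continuousOn
      (Set.mem_Ioo.mpr ⟨hy, hx⟩)
    exact ⟨t, ht, hft⟩

/-- A quadratic (in `t²`) with negative leading coefficient and positive constant term
has a root `t > 0`. -/
lemma quad_pos_root (p q r : ℝ) (hp : p < 0) (hr : 0 < r) :
    ∃ t : ℝ, 0 < t ∧ p*(t^2)^2 + q*t^2 + r = 0 := by
  have hdisc : 0 ≤ q^2 - 4*p*r := by nlinarith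
  have hs2 : Real.sqrt (q^2 - 4*p*r)^2 = q^2 - 4*p*r := Real.sq_sqrt hdisc
  have hsnn : 0 ≤ Real.sqrt (q^2 - 4*p*r) := Real.sqrt_nonneg _
  have hfs : -q < Real.sqrt (q^2 - 4*p*r) := by
    nlinarith [sq_nonneg (Real.sqrt (q^2 - 4*p*r) - q), sq_nonneg (Real.sqrt (q^2 - 4*p*r) + q)]
  have hx0 : 0 < (-q - Real.sqrt (q^2 - 4*p*r))/(2*p) :=
    div_pos_of_neg_of_neg (by linarith) (by linarith)
  have hp' : p ≠ 0 := ne_of_lt hp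
  refine ⟨Real.sqrt ((-q - Real.sqrt (q^2 - 4*p*r))/(2*p)), Real.sqrt_pos.mpr hx0, ?_⟩
  rw [Real.sq_sqrt (le_of_lt hx0)]
  generalize hS : Real.sqrt (q^2 - 4*p*r) = S at hs2 ⊢
  have hexp : p*((-q - S)/(2*p))^2 + q*((-q - S)/(2*p)) + r = (S^2 - (q^2 - 4*p*r))/(4*p) := by
    field_simp
    ring
  rw [hexp, hs2, sub_self, zero_div]

lemma ray_neg (a b c u v : ℝ) (hL : a*u + 3*b*v ≠ 0)
    (hf4 : 2*b*u^4 - 6*b*u^2*v^2 + 12*a*u*v^3 - c*(u^2+3*v^2)^2 < 0)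
    (hf0 : 0 < (a^2+3*b^2) * (2*a^2*b - (a^2+3*b^2)*c)) :
    goodPair a b c := by
  obtain ⟨t, ht0, hteq⟩ := quad_pos_root
    (2*b*u^4 - 6*b*u^2*v^2 + 12*a*u*v^3 - c*(u^2+3*v^2)^2)
    (4*a^2*b*u^2 + 6*a^2*b*v^2 + 12*a*b^2*u*v - 6*b^3*u^2 - 2*a^2*c*u^2
      + 6*a^2*c*v^2 + 6*b^2*c*u^2 - 18*b^2*c*v^2 - 24*a*b*c*u*v)
    ((a^2+3*b^2) * (2*a^2*b - (a^2+3*b^2)*c)) hf4 hf0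
  refine ⟨t*u, t*v, ?_, ?_⟩
  · simp only [Wex]
    linear_combination hteq
  · apply EFne'
    intro h
    apply mul_ne_zero (ne_of_gt ht0) hL
    linear_combination h/2

lemma ray (a b c u v : ℝ) (hL : a*u + 3*b*v ≠ 0)
    (hs : (2*b*u^4 - 6*b*u^2*v^2 + 12*a*u*v^3 - c*(u^2+3*v^2)^2)
          * (2*a^2*b - (a^2+3*b^2)*c) < 0) :
    goodPair a b c := by
  have hab : 0 < a^2 + 3*b^2 := by
    by_contra h
    push_neg at h
    have ha : a = 0 := by nlinarith
    have hb : b = 0 := by nlinarith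
    exact hL (by rw [ha, hb]; ring)
  rcases lt_trichotomy (2*b*u^4 - 6*b*u^2*v^2 + 12*a*u*v^3 - c*(u^2+3*v^2)^2) 0 with h4 | h4 | h4
  · have hpe : 0 < 2*a^2*b - (a^2+3*b^2)*c := by
      rcases lt_trichotomy (2*a^2*b - (a^2+3*b^2)*c) 0 with h | h | h
      · nlinarith
      · exfalso; rw [h] at hs; simp at hs
      · exact h
    exact ray_neg a b c u v hL h4 (by positivity)
  · exfalso; rw [h4] at hs; simp at hs
  · have hpe : 2*a^2*b - (a^2+3*b^2)*c < 0 := by nlinarith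
    have hL' : a*u + 3*(-b)*(-v) ≠ 0 := by
      intro h; exact hL (by linear_combination h)
    have h4' : 2*(-b)*u^4 - 6*(-b)*u^2*(-v)^2 + 12*a*u*(-v)^3 - (-c)*(u^2+3*(-v)^2)^2 < 0 := by
      nlinarith
    have h0' : 0 < (a^2+3*(-b)^2) * (2*a^2*(-b) - (a^2+3*(-b)^2)*(-c)) := by nlinarith
    obtain ⟨y0, y1, hW', hEF'⟩ := ray_neg a (-b) (-c) u (-v) hL' h4' h0'
    refine ⟨y0, -y1, ?_, ?_⟩
    · simp only [Wex] at hW' ⊢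
      linear_combination -hW'
    · intro h; apply hEF'; linear_combination h

/-- ellipse case : `a*(9b²−a²) ≠ 0` -/
lemma ellipse_case (a b c : ℝ) (hpe : 2*a^2*b - (a^2+3*b^2)*c ≠ 0)
    (hA : a*(9*b^2 - a^2) ≠ 0) : goodPair a b c := by
  have hs3 : (Real.sqrt 3)^2 = 3 := Real.sq_sqrt (by norm_num)
  have hs3p : 0 < Real.sqrt 3 := Real.sqrt_pos.mpr (by norm_num)
  set s : ℝ := Real.sqrt 3
  have hcont : Continuous (fun θ : ℝ =>
      ((s*b*Real.cos θ + a*Real.sin θ)^2 - a^2) * (b*Real.sin θ - (a*s/3)*Real.cos θ)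
      - 2*a*b*(s*b*Real.cos θ + a*Real.sin θ)
      + c*(a*(s*b*Real.cos θ + a*Real.sin θ) + 3*b*(b*Real.sin θ - (a*s/3)*Real.cos θ))) := by
    fun_prop
  set g : ℝ → ℝ := fun θ =>
      ((s*b*Real.cos θ + a*Real.sin θ)^2 - a^2) * (b*Real.sin θ - (a*s/3)*Real.cos θ)
      - 2*a*b*(s*b*Real.cos θ + a*Real.sin θ)
      + c*(a*(s*b*Real.cos θ + a*Real.sin θ) + 3*b*(b*Real.sin θ - (a*s/3)*Real.cos θ))
    with hgdef
  clear_value g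
  have hg0 : g 0 = -(a*s/3)*(9*b^2 - a^2) := by
    simp only [hgdef, Real.cos_zero, Real.sin_zero]
    linear_combination (-(a*b^2*s)/3) * hs3
  have hgpi : g Real.pi = (a*s/3)*(9*b^2 - a^2) := by
    simp only [hgdef, Real.cos_pi, Real.sin_pi]
    linear_combination ((a*b^2*s)/3) * hs3
  have hgm : g (Real.pi/2) = -(2*a^2*b - (a^2+3*b^2)*c) := by
    simp only [hgdef, Real.cos_pi_div_two, Real.sin_pi_div_two]
    ring
  have ha : a ≠ 0 := fun h => hA (by rw [h]; ring)
  have haz : 0 < a^2 + 3*b^2 := by positivity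
  have hprod : g 0 * g Real.pi < 0 := by
    rw [hg0, hgpi]
    have h9 : 9*b^2 - a^2 ≠ 0 := fun h => hA (by rw [h]; ring)
    have h1 : (a*s/3)*(9*b^2 - a^2) ≠ 0 :=
      mul_ne_zero (div_ne_zero (mul_ne_zero ha (ne_of_gt hs3p)) (by norm_num)) h9
    nlinarith [sq_pos_of_ne_zero h1]
  have hmne : g (Real.pi/2) ≠ 0 := by rw [hgm]; intro h; apply hpe; linarith [neg_eq_zero.mp h]
  have hpi2pos : (0:ℝ) < Real.pi/2 := by positivity
  have hpi2lt : Real.pi/2 < Real.pi := by linarith [Real.pi_pos]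
  have hsplit : g 0 * g (Real.pi/2) < 0 ∨ g (Real.pi/2) * g Real.pi < 0 := by
    by_contra hcon
    push_neg at hcon
    obtain ⟨h1, h2⟩ := hcon
    nlinarith [sq_pos_of_ne_zero hmne]
  have hθex : ∃ θ, θ ∈ Set.Ioo 0 Real.pi ∧ g θ = 0 := by
    rcases hsplit with h | h
    · obtain ⟨θ, hθ, hgθ⟩ := ivt_sign hcont hpi2pos h
      exact ⟨θ, ⟨hθ.1, lt_trans hθ.2 hpi2lt⟩, hgθ⟩
    · obtain ⟨θ, hθ, hgθ⟩ := ivt_sign hcont hpi2lt h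
      exact ⟨θ, ⟨lt_trans hpi2pos hθ.1, hθ.2⟩, hgθ⟩
  obtain ⟨θ, hθmem, hgθ⟩ := hθex
  have hsin : 0 < Real.sin θ := Real.sin_pos_of_pos_of_lt_pi hθmem.1 hθmem.2
  simp only [hgdef] at hgθ
  have hE : (s*b*Real.cos θ + a*Real.sin θ)^2 - a^2
      + 3*(b*Real.sin θ - a*s/3*Real.cos θ)^2 - 3*b^2 = 0 := by
    linear_combination ((b^2 + a^2/3)*(Real.cos θ)^2) * hs3
      + (a^2+3*b^2) * (Real.sin_sq_add_cos_sq θ)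
  have hF : 2*a*(s*b*Real.cos θ + a*Real.sin θ) + 6*b*(b*Real.sin θ - a*s/3*Real.cos θ)
      = 2*(a^2+3*b^2)*Real.sin θ := by ring
  refine ⟨s*b*Real.cos θ + a*Real.sin θ, b*Real.sin θ - a*s/3*Real.cos θ, ?_, ?_⟩
  · simp only [Wex]
    linear_combination
      (2*(((s*b*Real.cos θ + a*Real.sin θ)^2 - a^2)*b
          + 2*a*(s*b*Real.cos θ + a*Real.sin θ)*(b*Real.sin θ - a*s/3*Real.cos θ))
        - c*((s*b*Real.cos θ + a*Real.sin θ)^2 - a^2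
          + 3*(b*Real.sin θ - a*s/3*Real.cos θ)^2 - 3*b^2)) * hE
      - 2*(2*a*(s*b*Real.cos θ + a*Real.sin θ) + 6*b*(b*Real.sin θ - a*s/3*Real.cos θ)) * hgθ
  · apply EFne'
    rw [hF]
    positivity

/-- family 2 : works whenever `b ≠ 0` and `c(c-2b) > 0`. -/
lemma fam2 (a b c : ℝ) (hb : b ≠ 0) (hc : 0 < c*(c-2*b)) : goodPair a b c := by
  have hc2b : c - 2*b ≠ 0 := by intro h; rw [h] at hc; simp at hc
  have hq : 0 < 3*c/(c-2*b) := by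
    rcases lt_or_gt_of_ne hc2b with h | h
    · have hcneg : c < 0 := by nlinarith
      exact div_pos_of_neg_of_neg (by linarith) h
    · have hcpos : 0 < c := by nlinarith
      exact div_pos (by linarith) h
  have hμ2 : Real.sqrt (3*c/(c-2*b))^2 = 3*c/(c-2*b) := Real.sq_sqrt (le_of_lt hq)
  have hμ0 : 0 < Real.sqrt (3*c/(c-2*b)) := Real.sqrt_pos.mpr hq
  set μ : ℝ := Real.sqrt (3*c/(c-2*b)) with hμd
  clear_value μ
  have hμne : μ ≠ 0 := ne_of_gt hμ0
  have hmu : μ^2*(c-2*b) = 3*c := by rw [hμ2]; field_simp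
  have h3μ : 3 - μ^2 ≠ 0 := by
    intro h
    apply hb
    have h3 : μ^2 = 3 := by linarith
    rw [h3] at hmu
    linarith
  refine ⟨-μ*b, a/μ, ?_, ?_⟩
  · have hW4 : μ^4 * Wex a b c (-μ*b) (a/μ)
        = (3-μ^2)*(a^2+μ^2*b^2)^2*(μ^2*(c-2*b) - 3*c) := by
      simp only [Wex]
      field_simp
      ring
    have hz : μ^4 * Wex a b c (-μ*b) (a/μ) = μ^4 * 0 := by
      rw [hW4, mul_zero]
      linear_combination ((3-μ^2)*(a^2+μ^2*b^2)^2) * hmu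
    exact mul_left_cancel₀ (pow_ne_zero 4 hμne) hz
  · have hid : ((-μ*b)^2 - a^2 + 3*(a/μ)^2 - 3*b^2)^2 + (2*a*(-μ*b) + 6*b*(a/μ))^2
        = (3-μ^2)^2*((a/μ)^2+b^2)^2 := by
      field_simp
      ring
    rw [hid]
    have hpos : 0 < (a/μ)^2 + b^2 := by positivity
    exact mul_ne_zero (pow_ne_zero 2 h3μ) (pow_ne_zero 2 (ne_of_gt hpos))

/-- case a = 0, c(c-2b) < 0 -/
lemma a0_mid (b c : ℝ) (hb : b ≠ 0) (hc : c*(c-2*b) < 0) : goodPair 0 b c := by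
  have hspos : 0 < b^2 + 2*b*c - c^2 := by nlinarith
  have hs2 : Real.sqrt (b^2 + 2*b*c - c^2)^2 = b^2 + 2*b*c - c^2 :=
    Real.sq_sqrt (le_of_lt hspos)
  have hsnn : 0 ≤ Real.sqrt (b^2 + 2*b*c - c^2) := Real.sqrt_nonneg _
  have hsp0 : 0 < Real.sqrt (b^2 + 2*b*c - c^2) := Real.sqrt_pos.mpr hspos
  set s : ℝ := Real.sqrt (b^2 + 2*b*c - c^2) with hsd
  clear_value s
  have hsp : 0 < s := hsp0
  rcases lt_or_gt_of_ne hb with hbneg | hbpos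
  · have h1 : c < 0 := by nlinarith
    have h2 : 2*b - c < 0 := by nlinarith
    have h2ne : 2*b - c ≠ 0 := ne_of_lt h2
    have hupos : 0 < 6*b^2*(b-s)/(2*b-c) := by
      apply div_pos_of_neg_of_neg _ h2
      have : b - s < 0 := by nlinarith
      nlinarith [sq_pos_of_ne_zero hb]
    set u : ℝ := 6*b^2*(b-s)/(2*b-c) with hud
    have hA : (2*b-c)*u = 6*b^2*(b-s) := by rw [hud]; field_simp
    have huq : (2*b-c)*u^2 - 12*b^3*u - 36*c*b^4 = 0 := by
      apply mul_left_cancel₀ h2ne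
      rw [mul_zero]
      linear_combination ((2*b-c)*u - 6*b^2*(b+s)) * hA + 36*b^4 * hs2
    have hy0 : Real.sqrt u ^2 = u := Real.sq_sqrt (le_of_lt hupos)
    refine ⟨Real.sqrt u, b, ?_, ?_⟩
    · simp only [Wex]
      linear_combination huq + ((2*b-c)*(Real.sqrt u^2 + u) - 12*b^3) * hy0
    · apply EFne'
      intro h
      have : b^2 = 0 := by linear_combination h/6
      exact hb (by nlinarith)
  · have h1 : 0 < c := by nlinarith
    have h2 : 0 < 2*b - c := by nlinarith
    have h2ne : 2*b - c ≠ 0 := ne_of_gt h2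
    have hupos : 0 < 6*b^2*(b+s)/(2*b-c) := by
      apply div_pos _ h2
      nlinarith [sq_pos_of_ne_zero hb]
    set u : ℝ := 6*b^2*(b+s)/(2*b-c) with hud
    have hA : (2*b-c)*u = 6*b^2*(b+s) := by rw [hud]; field_simp
    have huq : (2*b-c)*u^2 - 12*b^3*u - 36*c*b^4 = 0 := by
      apply mul_left_cancel₀ h2ne
      rw [mul_zero]
      linear_combination ((2*b-c)*u - 6*b^2*(b-s)) * hA + 36*b^4 * hs2
    have hy0 : Real.sqrt u ^2 = u := Real.sq_sqrt (le_of_lt hupos)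
    refine ⟨Real.sqrt u, b, ?_, ?_⟩
    · simp only [Wex]
      linear_combination huq + ((2*b-c)*(Real.sqrt u^2 + u) - 12*b^3) * hy0
    · apply EFne'
      intro h
      have : b^2 = 0 := by linear_combination h/6
      exact hb (by nlinarith)

/-- case a = 0, c = 2b -/
lemma a0_top (b : ℝ) (hb : b ≠ 0) : goodPair 0 b (2*b) := by
  have hr2 : Real.sqrt 6 ^2 = 6 := Real.sq_sqrt (by norm_num)
  have hrp : 0 < Real.sqrt 6 := Real.sqrt_pos.mpr (by norm_num)
  set r : ℝ := Real.sqrt 6 with hrd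
  clear_value r
  refine ⟨7*b*r/6, b*r/6, ?_, ?_⟩
  · simp only [Wex]
    linear_combination (-(25:ℝ)/36*b^5*r^2 + 3*b^5) * hr2
  · apply EFne'
    intro h
    have hbr : b^2*r = 0 := by linear_combination h
    rcases mul_eq_zero.mp hbr with h' | h'
    · exact hb (by nlinarith)
    · exact (ne_of_gt hrp) h'

/-- case a² = 9b², c = 2b -/
lemma niner_top (a b : ℝ) (hb : b ≠ 0) (ha : a ≠ 0) (ha2 : a^2 = 9*b^2) :
    goodPair a b (2*b) := by
  have h12 : Real.sqrt 12 ^2 = 12 := Real.sq_sqrt (by norm_num)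
  have h12p : 0 < Real.sqrt 12 := Real.sqrt_pos.mpr (by norm_num)
  set r : ℝ := Real.sqrt 12 with hrd
  clear_value r
  have hy : (r*b)^2 = 12*b^2 := by rw [mul_pow, h12]
  refine ⟨r*b, 0, ?_, ?_⟩
  · simp only [Wex]
    linear_combination (-6*b^3) * ha2 + (6*b^3) * hy
  · apply EFne'
    intro h
    have : a*(r*b) = 0 := by linear_combination h/2
    rcases mul_eq_zero.mp this with h' | h'
    · exact ha h'
    · rcases mul_eq_zero.mp h' with h'' | h''
      · exact (ne_of_gt h12p) h''
      · exact hb h''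

/-- coverage: every `(a,b,c)` with `p(a,b,c) ≠ 0` admits a good pair. -/
lemma cover (a b c : ℝ) (hpe : 2*a^2*b - (a^2+3*b^2)*c ≠ 0) : goodPair a b c := by
  by_cases hA : a*(9*b^2 - a^2) = 0
  swap
  · exact ellipse_case a b c hpe hA
  have hb : b ≠ 0 := by
    intro hb0
    rw [hb0] at hA hpe
    have h3 : a^3 = 0 := by linear_combination -hA
    have ha : a = 0 := by
      exact pow_eq_zero_iff (n := 3) (by norm_num) |>.mp h3
    rw [ha] at hpe
    exact hpe (by ring)
  by_cases hcc : 0 < c*(c-2*b)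
  · exact fam2 a b c hb hcc
  push_neg at hcc
  by_cases ha0 : a = 0
  · subst ha0
    have hc : c ≠ 0 := by
      intro h
      exact hpe (by rw [h]; ring)
    by_cases hc2b : c = 2*b
    · subst hc2b
      exact a0_top b hb
    · have hlt : c*(c-2*b) < 0 :=
        lt_of_le_of_ne hcc (mul_ne_zero hc (sub_ne_zero.mpr hc2b))
      exact a0_mid b c hb hlt
  · have ha2 : a^2 = 9*b^2 := by
      rcases mul_eq_zero.mp hA with h | h
      · exact absurd h ha0
      · linarith
    have hpeq : 2*a^2*b - (a^2+3*b^2)*c = 6*b^2*(3*b-2*c) := by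
      linear_combination (2*b-c)*ha2
    have hc32 : 3*b - 2*c ≠ 0 := by
      intro h
      apply hpe
      rw [hpeq, h, mul_zero]
    by_cases hc0 : c = 0
    · subst hc0
      apply ray a b 0 (3*b) (-2*a)
      · intro h
        exact mul_ne_zero ha0 hb (by linear_combination -h/3)
      · have heq : (2*b*(3*b)^4 - 6*b*(3*b)^2*(-2*a)^2 + 12*a*(3*b)*(-2*a)^3
            - 0*((3*b)^2+3*(-2*a)^2)^2) * (2*a^2*b - (a^2+3*b^2)*0)
            = -451980*b^8 := by
          linear_combination (-50220*b^6 - 5616*a^2*b^4 - 576*a^4*b^2) * ha2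
        rw [heq]
        have : 0 < b^8 := by positivity
        linarith
    by_cases h1 : 0 < c*(3*b-2*c)
    · apply ray a b c 0 1
      · intro h
        exact hb (by linear_combination h/3)
      · rw [hpeq]
        nlinarith [sq_pos_of_ne_zero hb, h1]
    by_cases h2 : (2*b-c)*(3*b-2*c) < 0
    · apply ray a b c 1 0
      · intro h
        exact ha0 (by linear_combination h)
      · rw [hpeq]
        nlinarith [sq_pos_of_ne_zero hb, h2]
    by_cases hc2b : c = 2*b
    · subst hc2b
      exact niner_top a b hb ha0 ha2
    · exfalso
      push_neg at h1 h2
      have hlt : c*(c-2*b) < 0 :=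
        lt_of_le_of_ne hcc (mul_ne_zero hc0 (sub_ne_zero.mpr hc2b))
      have hApos : 0 < c*(2*b-c) := by nlinarith
      have key : c*(3*b-2*c) * ((2*b-c)*(3*b-2*c)) = (c*(2*b-c))*(3*b-2*c)^2 := by ring
      have hL : c*(3*b-2*c) * ((2*b-c)*(3*b-2*c)) ≤ 0 :=
        mul_nonpos_of_nonpos_of_nonneg h1 h2
      have hR : 0 < (c*(2*b-c))*(3*b-2*c)^2 :=
        mul_pos hApos (by positivity)
      rw [key] at hL
      linarith

/-- from a good pair, produce the witness `w` and the complex identity. -/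
lemma complex_of_W (a b c y0 y1 : ℝ)
    (hEF : (y0^2 - a^2 + 3*y1^2 - 3*b^2)^2 + (2*a*y0 + 6*b*y1)^2 ≠ 0)
    (hW : Wex a b c y0 y1 = 0) :
    ∃ w : ℝ, 2 * ((y0:ℂ) + (a:ℂ)*I)^2 * ((y1:ℂ) + (b:ℂ)*I)
        = (((y0:ℂ) + (a:ℂ)*I)^2 + 3*((y1:ℂ) + (b:ℂ)*I)^2) * ((w:ℂ) + (c:ℂ)*I) := by
  simp only [Wex] at hW
  have hEFpos : 0 < (y0^2 - a^2 + 3*y1^2 - 3*b^2)^2 + (2*a*y0 + 6*b*y1)^2 :=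
    lt_of_le_of_ne (by positivity) (Ne.symm hEF)
  have hne := ne_of_gt hEFpos
  refine ⟨2*(((y0^2 - a^2)*y1 - 2*a*y0*b)*(y0^2 - a^2 + 3*y1^2 - 3*b^2)
      + ((y0^2 - a^2)*b + 2*a*y0*y1)*(2*a*y0 + 6*b*y1))
      /((y0^2 - a^2 + 3*y1^2 - 3*b^2)^2 + (2*a*y0 + 6*b*y1)^2), ?_⟩
  set w : ℝ := 2*(((y0^2 - a^2)*y1 - 2*a*y0*b)*(y0^2 - a^2 + 3*y1^2 - 3*b^2)
      + ((y0^2 - a^2)*b + 2*a*y0*y1)*(2*a*y0 + 6*b*y1))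
      /((y0^2 - a^2 + 3*y1^2 - 3*b^2)^2 + (2*a*y0 + 6*b*y1)^2) with hw
  have h1 : (y0^2 - a^2 + 3*y1^2 - 3*b^2)*w - c*(2*a*y0 + 6*b*y1)
      = 2*((y0^2 - a^2)*y1 - 2*a*y0*b) := by
    rw [hw]
    linear_combination (2*a*y0 + 6*b*y1)/((y0^2 - a^2 + 3*y1^2 - 3*b^2)^2 + (2*a*y0 + 6*b*y1)^2) * hW + (2*((y0^2 - a^2)*y1 - 2*a*y0*b) + c*(2*a*y0 + 6*b*y1)) * mul_inv_cancel₀ hne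
  have h2 : c*(y0^2 - a^2 + 3*y1^2 - 3*b^2) + (2*a*y0 + 6*b*y1)*w
      = 2*((y0^2 - a^2)*b + 2*a*y0*y1) := by
    rw [hw]
    linear_combination (-(y0^2 - a^2 + 3*y1^2 - 3*b^2))/((y0^2 - a^2 + 3*y1^2 - 3*b^2)^2 + (2*a*y0 + 6*b*y1)^2) * hW + (2*((y0^2 - a^2)*b + 2*a*y0*y1) - c*(y0^2 - a^2 + 3*y1^2 - 3*b^2)) * mul_inv_cancel₀ hne
  have h1c : ((y0:ℂ)^2 - a^2 + 3*y1^2 - 3*b^2)*w - c*(2*a*y0 + 6*b*y1)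
      = 2*((y0^2 - a^2)*y1 - 2*a*y0*b) := by exact_mod_cast congrArg (fun t : ℝ => (t:ℂ)) h1
  have h2c : (c:ℂ)*(y0^2 - a^2 + 3*y1^2 - 3*b^2) + (2*a*y0 + 6*b*y1)*w
      = 2*((y0^2 - a^2)*b + 2*a*y0*y1) := by exact_mod_cast congrArg (fun t : ℝ => (t:ℂ)) h2
  linear_combination (-1 : ℂ) * h1c + (-I) * h2c
    + ((4*(y0:ℂ)*a*b + 2*a^2*y1 - 2*(a*y0+3*b*y1)*c - (a^2+3*b^2)*w)
       + (2*(a:ℂ)^2*b - (a^2+3*b^2)*c) * I) * Complex.I_sq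

lemma main_of_complex (e : Fin 3 → ℝ) (hpe : MvPolynomial.eval e examplePoly ≠ 0)
    (u v w : ℝ)
    (hC : 2 * ((u:ℂ) + (e 0:ℂ)*I)^2 * ((v:ℂ) + (e 1:ℂ)*I)
        = (((u:ℂ) + (e 0:ℂ)*I)^2 + 3*((v:ℂ) + (e 1:ℂ)*I)^2) * ((w:ℂ) + (e 2:ℂ)*I)) :
    ∃ x : Fin 3 → ℝ, ∃ z ∈ (linePoly examplePoly x e).roots, z.im ≠ 0 := by
  have hpe' : 2 * (e 0)^2 * (e 1) - ((e 0)^2 + 3*(e 1)^2) * (e 2) ≠ 0 := by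
    simpa [examplePoly] using hpe
  refine ⟨![u, v, w], -I, ?_, by simp⟩
  rw [mem_roots']
  constructor
  · intro h0
    apply hpe'
    have hev : ∀ t : ℂ, Polynomial.eval t (linePoly examplePoly ![u, v, w] e) = 0 := by
      intro t; rw [h0]; simp
    have e0 := hev 0
    have e1 := hev 1
    have e2 := hev 2
    have e3 := hev 3
    simp [linePoly, examplePoly] at e0 e1 e2 e3
    have : ((2 * (e 0)^2 * (e 1) - ((e 0)^2 + 3*(e 1)^2) * (e 2) : ℝ) : ℂ) = 0 := by
      push_cast
      linear_combination ((1:ℂ)/6) * e0 - (1/2) * e1 + (1/2) * e2 - (1/6) * e3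
    exact_mod_cast this
  · show Polynomial.IsRoot _ (-I)
    have hev : Polynomial.eval (-I) (linePoly examplePoly ![u, v, w] e)
      = 2 * ((u:ℂ) - (e 0:ℂ) * (-I))^2 * ((v:ℂ) - (e 1:ℂ) * (-I))
        - (((u:ℂ) - (e 0:ℂ) * (-I))^2 + 3*((v:ℂ) - (e 1:ℂ) * (-I))^2)
          * ((w:ℂ) - (e 2:ℂ) * (-I)) := by
      simp [linePoly, examplePoly]
    rw [IsRoot, hev]
    linear_combination hC

end NotHyperbolicAux

/-- **Example (not hyperbolic).** `p(x₀,x₁,x₂) = 2x₀²x₁ − (x₀² + 3x₁²)x₂` is not hyperbolic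
with respect to any direction: for every `e ∈ ℝ³` with `p(e) ≠ 0` there is an `x ∈ ℝ³` such
that `t ↦ p(x − t·e)` has a non-real zero. -/
theorem examplePoly_not_hyperbolic :
    ∀ e : Fin 3 → ℝ, MvPolynomial.eval e examplePoly ≠ 0 →
      ∃ x : Fin 3 → ℝ, ∃ z ∈ (linePoly examplePoly x e).roots, z.im ≠ 0 := by
  intro e hpe
  have hpe' : 2 * (e 0)^2 * (e 1) - ((e 0)^2 + 3*(e 1)^2) * (e 2) ≠ 0 := by
    simpa [examplePoly] using hpe
  obtain ⟨y0, y1, hW, hEF⟩ := NotHyperbolicAux.cover (e 0) (e 1) (e 2) hpe'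
  obtain ⟨w, hC⟩ := NotHyperbolicAux.complex_of_W (e 0) (e 1) (e 2) y0 y1 hEF hW
  exact NotHyperbolicAux.main_of_complex e hpe y0 y1 w hC
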